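/- arXiv:2605.26920 — 5 statements merged into one kernel-verified Lean document; each statement's English description precedes it below -/
import Mathlib

section
/- For d ≥ 2, m ≥ 1, define V_i = Σ_{k=1}^{d} |e^d_k⟩⟨e^{d+m}_{mod(k+i-2, d+1)+1}| for 1 ≤ i ≤ d+1 and V_i = |J_d⟩⟨e^{d+m}_i| for d+2 ≤ i ≤ d+m, where |J_d⟩ is the all-ones column vector in ℂ^d. Then (1/(d(d+m))) Σ_{i=1}^{d+m} V_i V_i^† = p·I_d/d + (1−p)·J_d/d with p = (d+1)/(d+m), where J_d is the d×d all-ones matrix. -/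
open Matrix

lemma card_filt (n c : ℕ) (h : c ≤ n) :
    ((Finset.univ.filter fun i : Fin n => (i:ℕ) < c).card = c) := by
  have : (Finset.univ.filter fun i : Fin n => (i:ℕ) < c).card
      = (Finset.univ : Finset (Fin c)).card := by
    apply Finset.card_bij (fun (i : Fin n) hi => (⟨i, (Finset.mem_filter.mp hi).2⟩ : Fin c))
    · intros; simp
    · intro a ha b hb hab; simpa [Fin.ext_iff] using congrArg Fin.val hab
    · intro b _; exact ⟨⟨b, lt_of_lt_of_le b.2 h⟩, by simp [b.2], rfl⟩
  simpa using this

/-- The Kraus operators of the paper, written with 0-based indices: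
for `i < d+1` (i.e. `1 ≤ i ≤ d+1` in 1-based terms),
`V i = Σ_k |e^d_k⟩⟨e^{d+m}_{(k+i) mod (d+1)}|`, and for `i ≥ d+1`
(1-based `i ≥ d+2`), `V i = |J_d⟩⟨e^{d+m}_i|`. -/
theorem stmt_2 (d m : ℕ) (hd : 2 ≤ d) (hm : 1 ≤ m)
    (V : Fin (d + m) → Matrix (Fin d) (Fin (d + m)) ℂ)
    (hV : ∀ i, V i = if (i : ℕ) < d + 1 then
        Matrix.of (fun (k : Fin d) (j : Fin (d + m)) =>
          if (j : ℕ) = ((k : ℕ) + (i : ℕ)) % (d + 1) then 1 else 0)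
      else
        Matrix.of (fun (_ : Fin d) (j : Fin (d + m)) => if j = i then 1 else 0)) :
    (1 / ((d : ℂ) * (d + m))) • ∑ i, V i * (V i)ᴴ =
      (((d : ℂ) + 1) / ((d : ℂ) + m)) • ((d : ℂ)⁻¹ • (1 : Matrix (Fin d) (Fin d) ℂ)) +
      (1 - ((d : ℂ) + 1) / ((d : ℂ) + m)) •
        ((d : ℂ)⁻¹ • Matrix.of (fun (_ _ : Fin d) => (1 : ℂ))) := by
  have hmlt : d + 1 ≤ d + m := by omega
  have key : ∀ i : Fin (d+m), V i * (V i)ᴴ =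
      if (i:ℕ) < d + 1 then (1 : Matrix (Fin d) (Fin d) ℂ)
      else Matrix.of (fun _ _ => (1:ℂ)) := by
    intro i
    rw [hV]
    by_cases hi : (i:ℕ) < d + 1
    · simp only [hi, if_true]
      ext k k'
      simp only [mul_apply, conjTranspose_apply, of_apply, apply_ite (star : ℂ → ℂ), star_one, star_zero]
      have hk : ((k:ℕ) + i) % (d+1) < d + m :=
        lt_of_lt_of_le (Nat.mod_lt _ (by omega)) hmlt
      have hk' : ((k':ℕ) + i) % (d+1) < d + m :=
        lt_of_lt_of_le (Nat.mod_lt _ (by omega)) hmlt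
      have e1 : ∀ j : Fin (d+m), ((j:ℕ) = ((k:ℕ)+(i:ℕ)) % (d+1)) =
          (j = ⟨((k:ℕ)+(i:ℕ)) % (d+1), hk⟩) := fun j => by simp [Fin.ext_iff]
      have e2 : ∀ j : Fin (d+m), ((j:ℕ) = ((k':ℕ)+(i:ℕ)) % (d+1)) =
          (j = ⟨((k':ℕ)+(i:ℕ)) % (d+1), hk'⟩) := fun j => by simp [Fin.ext_iff]
      simp_rw [e1, e2]
      rw [one_apply]
      simp only [mul_ite, ite_mul, one_mul, mul_one, mul_zero, zero_mul]
      rw [Finset.sum_ite_eq' Finset.univ (⟨((k':ℕ)+(i:ℕ)) % (d+1), hk'⟩ : Fin (d+m))]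
      simp only [Finset.mem_univ, if_true]
      have hiff : (⟨((k':ℕ)+(i:ℕ)) % (d+1), hk'⟩ : Fin (d+m)) =
          ⟨((k:ℕ)+(i:ℕ)) % (d+1), hk⟩ ↔ k = k' := by
        rw [Fin.ext_iff, Fin.ext_iff]
        constructor
        · intro h
          have h2 : (k':ℕ) ≡ (k:ℕ) [MOD d+1] := Nat.ModEq.add_right_cancel' (i:ℕ) h
          have h3 : (k':ℕ) % (d+1) = (k:ℕ) % (d+1) := h2
          rw [Nat.mod_eq_of_lt (by omega), Nat.mod_eq_of_lt (by omega)] at h3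
          omega
        · intro h; simp [h]
      by_cases hkk : k = k'
      · simp [hkk]
      · rw [if_neg (fun h => hkk (hiff.mp h)), if_neg hkk]
    · simp only [hi, if_false]
      ext k k'
      simp only [mul_apply, conjTranspose_apply, of_apply, apply_ite (star : ℂ → ℂ), star_one, star_zero]
      simp [Finset.sum_ite_eq']
  rw [Finset.sum_congr rfl (fun i _ => key i), Finset.sum_ite, Finset.sum_const,
    Finset.sum_const]
  have hc1 : (Finset.univ.filter fun i : Fin (d+m) => (i:ℕ) < d + 1).card = d + 1 :=
    card_filt _ _ hmlt
  have hc2 : (Finset.univ.filter fun i : Fin (d+m) => ¬ (i:ℕ) < d + 1).card = m - 1 := by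
    have := Finset.card_filter_add_card_filter_not
      (s := (Finset.univ : Finset (Fin (d+m)))) (p := fun i => (i:ℕ) < d + 1)
    simp only [Finset.card_univ, Fintype.card_fin] at this
    omega
  rw [hc1, hc2]
  have hd0 : (d:ℂ) ≠ 0 := Nat.cast_ne_zero.mpr (by omega)
  have hdm0 : (d:ℂ) + m ≠ 0 := by
    have : ((d+m:ℕ):ℂ) ≠ 0 := Nat.cast_ne_zero.mpr (by omega)
    push_cast at this; exact this
  ext k k'
  simp only [Matrix.smul_apply, Matrix.add_apply, Matrix.of_apply, ← Nat.cast_smul_eq_nsmul ℂ,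
    Matrix.one_apply, smul_eq_mul, Nat.cast_add, Nat.cast_one]
  have hm1 : ((m - 1 : ℕ) : ℂ) = (m : ℂ) - 1 := by
    have : (1:ℕ) ≤ m := hm
    push_cast [this]; ring
  rw [hm1]
  by_cases hkk : k = k'
  · simp only [hkk, if_pos rfl]
    field_simp
    simp only [if_true]; ring
  · simp only [hkk, if_neg hkk]
    field_simp
    simp only [if_false]; ring
end

section
/- For d ≥ 2, m ≥ 1 and V_i defined as: V_i = Σ_{k=1}^{d} |e^d_k⟩⟨e^{d+m}_{mod(k+i-2, d+1)+1}| for 1 ≤ i ≤ d+1, and V_i = |J_d⟩⟨e^{d+m}_i| for d+2 ≤ i ≤ d+m, the identity (1/(d(d+m))) Σ_{i=1}^{d+m} V_i^† V_i = I_{d+m}/(d+m) holds. -/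
open Matrix

noncomputable def krausTerm' (d a b i k : ℕ) : ℂ :=
  (if i < d + 1 then (if a = (k + i) % (d + 1) then (1:ℂ) else 0)
    else (if a = i then 1 else 0)) *
  (if i < d + 1 then (if b = (k + i) % (d + 1) then (1:ℂ) else 0)
    else (if b = i then 1 else 0))

lemma mod_aux (n k a : ℕ) (hn : 0 < n) (ha : a < n) :
    (k + (a + n - k % n) % n) % n = a := by
  have h := Nat.mod_add_div k n
  have hk := Nat.mod_lt k hn
  rw [Nat.add_mod_mod]
  have h2 : k + (a + n - k % n) = n * (k / n) + (a + n) := by omega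
  rw [h2, Nat.mul_add_mod, Nat.add_mod_right, Nat.mod_eq_of_lt ha]

lemma count_one_aux (n k a : ℕ) (hn : 0 < n) (ha : a < n) :
    ∑ i ∈ Finset.range n, (if a = (k + i) % n then (1:ℂ) else 0) = 1 := by
  rw [Finset.sum_eq_single_of_mem ((a + n - k % n) % n)
      (Finset.mem_range.mpr (Nat.mod_lt _ hn))]
  · rw [if_pos (mod_aux n k a hn ha).symm]
  · intro i hi hne
    rw [if_neg]
    intro hcon
    apply hne
    have h0 := mod_aux n k a hn ha
    have h1 : (k + i) % n = (k + (a + n - k % n) % n) % n := by rw [h0, hcon]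
    have h2 : i ≡ (a + n - k % n) % n [MOD n] := Nat.ModEq.add_left_cancel' k h1
    have h3 : i % n = ((a + n - k % n) % n) % n := h2
    rwa [Nat.mod_eq_of_lt (Finset.mem_range.mp hi), Nat.mod_mod_of_dvd _ dvd_rfl] at h3

lemma total_aux (d m a b : ℕ) (hd : 2 ≤ d) (hm : 1 ≤ m) (ha : a < d + m) (hb : b < d + m) :
    ∑ i ∈ Finset.range (d + m), ∑ k ∈ Finset.range d, krausTerm' d a b i k
      = if a = b then (d:ℂ) else 0 := by
  by_cases hab : a = b
  · subst hab
    rw [if_pos rfl]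
    have hsum : ∀ i ∈ Finset.range (d + m), ∑ k ∈ Finset.range d, krausTerm' d a a i k
        = ∑ k ∈ Finset.range d, (if i < d + 1 then (if a = (k + i) % (d + 1) then (1:ℂ) else 0)
            else (if a = i then 1 else 0)) := by
      intro i _
      refine Finset.sum_congr rfl fun k _ => ?_
      unfold krausTerm'
      split_ifs <;> ring
    rw [Finset.sum_congr rfl hsum, ← Finset.sum_range_add_sum_Ico _ (show d + 1 ≤ d + m by omega)]
    have e1 : ∑ i ∈ Finset.range (d + 1), ∑ k ∈ Finset.range d,
        (if i < d + 1 then (if a = (k + i) % (d + 1) then (1:ℂ) else 0)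
          else (if a = i then 1 else 0))
        = ∑ i ∈ Finset.range (d + 1), ∑ k ∈ Finset.range d,
          (if a = (k + i) % (d + 1) then (1:ℂ) else 0) := by
      refine Finset.sum_congr rfl fun i hi => Finset.sum_congr rfl fun k _ => ?_
      rw [if_pos (Finset.mem_range.mp hi)]
    have e2 : ∑ i ∈ Finset.Ico (d + 1) (d + m), ∑ k ∈ Finset.range d,
        (if i < d + 1 then (if a = (k + i) % (d + 1) then (1:ℂ) else 0)
          else (if a = i then 1 else 0))
        = if a ∈ Finset.Ico (d + 1) (d + m) then (d:ℂ) else 0 := by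
      rw [← Finset.sum_ite_eq (Finset.Ico (d + 1) (d + m)) a (fun _ => (d:ℂ))]
      refine Finset.sum_congr rfl fun i hi => ?_
      have hni : ¬ i < d + 1 := not_lt.mpr (Finset.mem_Ico.mp hi).1
      rw [Finset.sum_congr rfl (fun k _ => if_neg hni), Finset.sum_const, Finset.card_range]
      split_ifs <;> simp
    rw [e1, e2]
    by_cases haa : a < d + 1
    · rw [Finset.sum_comm]
      rw [Finset.sum_congr rfl (fun k _ => count_one_aux (d + 1) k a (by omega) haa)]
      rw [Finset.sum_const, Finset.card_range,
        if_neg (by simp [Finset.mem_Ico]; omega)]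
      simp
    · have hz : ∑ i ∈ Finset.range (d + 1), ∑ k ∈ Finset.range d,
          (if a = (k + i) % (d + 1) then (1:ℂ) else 0) = 0 := by
        refine Finset.sum_eq_zero fun i _ => Finset.sum_eq_zero fun k _ => ?_
        rw [if_neg]
        have := Nat.mod_lt (k + i) (show 0 < d + 1 by omega)
        omega
      rw [hz, if_pos (by simp [Finset.mem_Ico]; omega)]
      simp
  · rw [if_neg hab]
    refine Finset.sum_eq_zero fun i _ => Finset.sum_eq_zero fun k _ => ?_
    unfold krausTerm'
    split_ifs <;> first | omega | ring

/-- Kraus operators as in the paper (0-based indices). -/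
theorem stmt_3 (d m : ℕ) (hd : 2 ≤ d) (hm : 1 ≤ m)
    (V : Fin (d + m) → Matrix (Fin d) (Fin (d + m)) ℂ)
    (hV : ∀ i, V i = if (i : ℕ) < d + 1 then
        Matrix.of (fun (k : Fin d) (j : Fin (d + m)) =>
          if (j : ℕ) = ((k : ℕ) + (i : ℕ)) % (d + 1) then 1 else 0)
      else
        Matrix.of (fun (_ : Fin d) (j : Fin (d + m)) => if j = i then 1 else 0)) :
    (1 / ((d : ℂ) * (d + m))) • ∑ i, (V i)ᴴ * V i =
      ((d : ℂ) + m)⁻¹ • (1 : Matrix (Fin (d + m)) (Fin (d + m)) ℂ) := by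
  have key : ∀ a b : Fin (d + m), (∑ i, (V i)ᴴ * V i) a b
      = if a = b then (d:ℂ) else 0 := by
    intro a b
    have hterm : ∀ (i : Fin (d + m)) (k : Fin d),
        star (V i k a) * V i k b = krausTerm' d ↑a ↑b ↑i ↑k := by
      intro i k
      unfold krausTerm'
      rcases lt_or_ge (i:ℕ) (d+1) with h | h
      · rw [hV i, if_pos h, if_pos h, if_pos h]
        simp [apply_ite (star : ℂ → ℂ)]
      · rw [hV i, if_neg (not_lt.mpr h), if_neg (not_lt.mpr h), if_neg (not_lt.mpr h)]
        simp [Fin.ext_iff, apply_ite (star : ℂ → ℂ)]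
    have e0 : (∑ i, (V i)ᴴ * V i) a b
        = ∑ i : Fin (d + m), ∑ k : Fin d, krausTerm' d ↑a ↑b ↑i ↑k := by
      rw [Matrix.sum_apply]
      refine Finset.sum_congr rfl fun i _ => ?_
      rw [Matrix.mul_apply]
      exact Finset.sum_congr rfl fun k _ => by rw [Matrix.conjTranspose_apply, hterm]
    rw [e0]
    have e1 : ∑ i : Fin (d + m), ∑ k : Fin d, krausTerm' d ↑a ↑b ↑i ↑k
        = ∑ i ∈ Finset.range (d + m), ∑ k ∈ Finset.range d, krausTerm' d ↑a ↑b i k := by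
      rw [← Fin.sum_univ_eq_sum_range (fun i => ∑ k ∈ Finset.range d, krausTerm' d ↑a ↑b i k)]
      exact Finset.sum_congr rfl fun i _ =>
        Fin.sum_univ_eq_sum_range (fun k => krausTerm' d ↑a ↑b ↑i k) d
    rw [e1, total_aux d m ↑a ↑b hd hm a.isLt b.isLt]
    simp [Fin.ext_iff]
  ext a b
  rw [Matrix.smul_apply, Matrix.smul_apply, key a b, Matrix.one_apply]
  have hd0 : (d:ℂ) ≠ 0 := Nat.cast_ne_zero.mpr (by omega)
  have hdm0 : ((d:ℂ) + m) ≠ 0 := by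
    have : ((d:ℂ) + m) = ((d + m : ℕ):ℂ) := by push_cast; ring
    rw [this]
    exact Nat.cast_ne_zero.mpr (by omega)
  by_cases hab : a = b
  · rw [if_pos hab, if_pos hab]
    rw [smul_eq_mul, smul_eq_mul]
    field_simp
  · rw [if_neg hab, if_neg hab]
    simp
end

section
/- Let A_1 = diag(1/√3, 1) and A_2 be the 2×2 matrix with zero diagonal and both off-diagonal entries 1/√3. Then (1/2)(A_1^† A_1 + A_2^† A_2) = (1/2)(A_1 A_1^† + A_2 A_2^†) = diag(1/3, 2/3), and the four matrices {A_i^† A_j : 1 ≤ i, j ≤ 2} are linearly independent in M_2(ℂ). -/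
open Matrix

noncomputable def A8 : Fin 2 → Matrix (Fin 2) (Fin 2) ℂ :=
  ![!![((Real.sqrt 3 : ℝ) : ℂ)⁻¹, 0; 0, 1],
    !![0, ((Real.sqrt 3 : ℝ) : ℂ)⁻¹; ((Real.sqrt 3 : ℝ) : ℂ)⁻¹, 0]]

lemma s8_sq : (((Real.sqrt 3:ℝ):ℂ)⁻¹) * (((Real.sqrt 3:ℝ):ℂ)⁻¹) = 1/3 := by
  rw [← mul_inv]
  norm_cast
  rw [Real.mul_self_sqrt (by norm_num)]
  norm_num

lemma s8_conj : (starRingEnd ℂ) ((Real.sqrt 3:ℝ):ℂ)⁻¹ = ((Real.sqrt 3:ℝ):ℂ)⁻¹ := by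
  simp [Complex.conj_ofReal]

lemma A8_0_H : (A8 0)ᴴ = A8 0 := by
  ext i j
  fin_cases i <;> fin_cases j <;>
    simp [A8, Matrix.conjTranspose_apply, s8_conj]

lemma A8_1_H : (A8 1)ᴴ = A8 1 := by
  ext i j
  fin_cases i <;> fin_cases j <;>
    simp [A8, Matrix.conjTranspose_apply, s8_conj]

theorem stmt_8 :
    (1 / 2 : ℂ) • ((A8 0)ᴴ * A8 0 + (A8 1)ᴴ * A8 1) = !![(1/3 : ℂ), 0; 0, 2/3] ∧
    (1 / 2 : ℂ) • (A8 0 * (A8 0)ᴴ + A8 1 * (A8 1)ᴴ) = !![(1/3 : ℂ), 0; 0, 2/3] ∧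
    LinearIndependent ℂ (fun p : Fin 2 × Fin 2 => (A8 p.1)ᴴ * A8 p.2) := by
  set s : ℂ := ((Real.sqrt 3:ℝ):ℂ)⁻¹ with hs
  have hs2 : s * s = 1/3 := s8_sq
  refine ⟨?_, ?_, ?_⟩
  · rw [A8_0_H, A8_1_H]
    show (1/2 : ℂ) • (!![s, 0; 0, 1] * !![s, 0; 0, 1] + !![0, s; s, 0] * !![0, s; s, 0]) = _
    rw [Matrix.mul_fin_two, Matrix.mul_fin_two]
    ext i j
    fin_cases i <;> fin_cases j <;>
      simp [hs2] <;> ring_nf <;> rw [hs2] <;> ring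
  · rw [A8_0_H, A8_1_H]
    show (1/2 : ℂ) • (!![s, 0; 0, 1] * !![s, 0; 0, 1] + !![0, s; s, 0] * !![0, s; s, 0]) = _
    rw [Matrix.mul_fin_two, Matrix.mul_fin_two]
    ext i j
    fin_cases i <;> fin_cases j <;>
      simp [hs2] <;> ring_nf <;> rw [hs2] <;> ring
  · rw [Fintype.linearIndependent_iff]
    intro g h
    have hM : ∀ p : Fin 2 × Fin 2, (A8 p.1)ᴴ * A8 p.2 =
        ![![!![s*s, 0; 0, 1], !![0, s*s; s, 0]],
          ![!![0, s; s*s, 0], !![s*s, 0; 0, s*s]]] p.1 p.2 := by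
      intro p
      fin_cases p <;>
        · ext i j
          fin_cases i <;> fin_cases j <;>
            simp [A8, hs, Matrix.mul_apply, Fin.sum_univ_two,
              Matrix.conjTranspose_apply, s8_conj]
    simp only [hM] at h
    rw [Fintype.sum_prod_type] at h
    simp only [Fin.sum_univ_two] at h
    have e00 := congrFun (congrFun h 0) 0
    have e01 := congrFun (congrFun h 0) 1
    have e10 := congrFun (congrFun h 1) 0
    have e11 := congrFun (congrFun h 1) 1
    simp [Matrix.add_apply, Matrix.smul_apply, hs2] at e00 e01 e10 e11
    have h00 : g (0,0) = 0 := by linear_combination (3/2 : ℂ) * e11 - (3/2 : ℂ) * e00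
    have h11 : g (1,1) = 0 := by linear_combination (9/2 : ℂ) * e00 - (3/2 : ℂ) * e11
    have h01 : g (0,1) = 0 := by
      linear_combination (-3/2 : ℂ) * e01 + (9/2 : ℂ) * s * e10 - (9/2 : ℂ) * g (0,1) * hs2
    have h10 : g (1,0) = 0 := by
      linear_combination (-3/2 : ℂ) * e10 + (9/2 : ℂ) * s * e01 - (9/2 : ℂ) * g (1,0) * hs2
    intro p
    obtain ⟨i, j⟩ := p
    fin_cases i <;> fin_cases j <;> assumption
end

section
/- Given d ≥ 3, let V_1 = √((d−2)/(d−1)) Σ_{j=2}^{d} E_{jj} and V_k = (1/√(d−1))(E_{1k} + E_{k1}) for 2 ≤ k ≤ d in M_d(ℂ). Then Σ_{j=1}^{d} V_j² = I_d, each V_j is Hermitian, and the d² block-diagonal matrices diag(V_i V_j, V_j V_i) for 1 ≤ i, j ≤ d are linearly independent over ℂ. -/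
open Matrix

/-- Statement 11, with 0-based indices: `V 0 = √((d−2)/(d−1)) Σ_{j≠0} E_{jj}` and
`V k = (1/√(d−1))(E_{0k} + E_{k0})` for `k ≠ 0`. -/
theorem stmt_11 (d : ℕ) (hd : 3 ≤ d) (V : Fin d → Matrix (Fin d) (Fin d) ℂ)
    (hV : ∀ i, V i = if (i : ℕ) = 0 then
        ((Real.sqrt (((d : ℝ) - 2) / ((d : ℝ) - 1)) : ℝ) : ℂ) •
          Matrix.of (fun (a b : Fin d) => if a = b ∧ (a : ℕ) ≠ 0 then 1 else 0)
      else
        (((Real.sqrt ((d : ℝ) - 1) : ℝ) : ℂ))⁻¹ •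
          (Matrix.of (fun (a b : Fin d) => if (a : ℕ) = 0 ∧ b = i then 1 else 0) +
           Matrix.of (fun (a b : Fin d) => if a = i ∧ (b : ℕ) = 0 then 1 else 0))) :
    (∑ j, V j * V j) = 1 ∧ (∀ j, (V j)ᴴ = V j) ∧
    LinearIndependent ℂ (fun p : Fin d × Fin d =>
      Matrix.fromBlocks (V p.1 * V p.2) 0 0 (V p.2 * V p.1)) := by
  -- Part 2: each `V j` is Hermitian.
  have part2 : ∀ j, (V j)ᴴ = V j := by
    intro j
    rw [hV j]
    by_cases hj : (j : ℕ) = 0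
    · rw [if_pos hj, conjTranspose_smul]
      have h1 : (Matrix.of (fun (a b : Fin d) => if a = b ∧ (a : ℕ) ≠ 0 then (1:ℂ) else 0))ᴴ
          = Matrix.of (fun (a b : Fin d) => if a = b ∧ (a : ℕ) ≠ 0 then (1:ℂ) else 0) := by
        ext a b
        rcases eq_or_ne a b with rfl | hab
        · simp [conjTranspose_apply, apply_ite]
        · simp [conjTranspose_apply, hab, Ne.symm hab]
      rw [h1]
      congr 1
      simp [Complex.star_def, Complex.conj_ofReal]
    · rw [if_neg hj, conjTranspose_smul, conjTranspose_add]
      have h1 : (Matrix.of (fun (a b : Fin d) => if (a : ℕ) = 0 ∧ b = j then (1:ℂ) else 0))ᴴ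
          = Matrix.of (fun (a b : Fin d) => if a = j ∧ (b : ℕ) = 0 then (1:ℂ) else 0) := by
        ext a b
        simp [conjTranspose_apply, apply_ite, and_comm]
      have h2 : (Matrix.of (fun (a b : Fin d) => if a = j ∧ (b : ℕ) = 0 then (1:ℂ) else 0))ᴴ
          = Matrix.of (fun (a b : Fin d) => if (a : ℕ) = 0 ∧ b = j then (1:ℂ) else 0) := by
        ext a b
        simp [conjTranspose_apply, apply_ite, and_comm]
      rw [h1, h2, add_comm]
      congr 1
      simp [Complex.star_def, Complex.conj_ofReal]
  obtain ⟨m, rfl⟩ : ∃ m, d = m + 3 := ⟨d - 3, by omega⟩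
  have hz : ∀ i : Fin (m+3), ((i:ℕ) = 0) ↔ i = 0 := fun i => ⟨fun h => Fin.ext h, fun h => by rw [h]; rfl⟩
  -- extract the scalars
  obtain ⟨c, s, hc2, hs2, hV0, hVk⟩ :
      ∃ c s : ℂ, c * c = ((m:ℂ)+1)/((m:ℂ)+2) ∧ s * s = ((m:ℂ)+2)⁻¹ ∧
        V 0 = c • (1 - Matrix.single 0 0 1) ∧
        ∀ k : Fin (m+3), k ≠ 0 →
          V k = s • (Matrix.single 0 k 1 + Matrix.single k 0 1) := by
    refine ⟨((Real.sqrt ((((m+3:ℕ) : ℝ) - 2) / (((m+3:ℕ) : ℝ) - 1)) : ℝ) : ℂ),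
      (((Real.sqrt (((m+3:ℕ) : ℝ) - 1) : ℝ) : ℂ))⁻¹, ?_, ?_, ?_, ?_⟩
    · rw [← Complex.ofReal_mul, Real.mul_self_sqrt (by
        have hm : (0:ℝ) ≤ m := Nat.cast_nonneg m
        push_cast
        apply div_nonneg <;> linarith)]
      push_cast
      ring_nf
    · rw [← mul_inv, ← Complex.ofReal_mul, Real.mul_self_sqrt (by
        have hm : (0:ℝ) ≤ m := Nat.cast_nonneg m
        push_cast
        linarith)]
      push_cast
      ring_nf
    · rw [hV 0, if_pos (by simp)]
      congr 1
      ext a b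
      rcases eq_or_ne a b with rfl | hab
      · rcases eq_or_ne a 0 with rfl | ha
        · simp [Matrix.single, one_apply]
        · simp [Matrix.single, one_apply, ha, (hz a).not.2 ha, Ne.symm ha]
      · have h0 : ¬((0:Fin (m+3)) = a ∧ (0:Fin (m+3)) = b) := by
          rintro ⟨rfl, rfl⟩; exact hab rfl
        simp [Matrix.single, one_apply, hab, h0]
    · intro k hk
      rw [hV k, if_neg ((hz k).not.2 hk)]
      congr 1
      ext a b
      simp [Matrix.single, hz, eq_comm]
  refine ⟨?_, part2, ?_⟩
  -- Part 1: sum of squares is the identity.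
  · have hkk : ∀ k : Fin (m+3), k ≠ 0 →
        V k * V k = (s*s) • (Matrix.single 0 0 1 + Matrix.single k k 1) := by
      intro k hk
      rw [hVk k hk, Matrix.smul_mul, Matrix.mul_smul, smul_smul]
      congr 1
      rw [add_mul, mul_add, mul_add, Matrix.single_mul_single_same, Matrix.single_mul_single_same,
        Matrix.single_mul_single_of_ne (h := hk), Matrix.single_mul_single_of_ne (h := (Ne.symm hk)),
        mul_one]
      abel
    have h00 : V 0 * V 0 = (c*c) • (1 - Matrix.single 0 0 1) := by
      rw [hV0, Matrix.smul_mul, Matrix.mul_smul, smul_smul]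
      congr 1
      rw [sub_mul, mul_sub, mul_sub, one_mul, mul_one, Matrix.single_mul_single_same, mul_one]
      simp only [one_mul]
      abel
    rw [← Finset.add_sum_erase _ _ (Finset.mem_univ (0 : Fin (m+3))), h00,
      Finset.sum_congr rfl (fun j hj => hkk j (Finset.ne_of_mem_erase hj))]
    rw [← Finset.smul_sum, Finset.sum_add_distrib, Finset.sum_const,
      Finset.card_erase_of_mem (Finset.mem_univ _), Finset.card_univ, Fintype.card_fin]
    have hsum : ∑ j ∈ Finset.univ.erase (0 : Fin (m+3)), Matrix.single j j (1:ℂ)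
        = 1 - Matrix.single 0 0 1 := by
      ext a b
      rw [Matrix.sum_apply]
      rcases eq_or_ne a b with rfl | hab
      · rcases eq_or_ne a 0 with rfl | ha
        · rw [Finset.sum_eq_zero]
          · simp [one_apply, Matrix.single]
          · intro j hj
            have := Finset.ne_of_mem_erase hj
            simp [Matrix.single, this]
        · rw [Finset.sum_eq_single a]
          · simp [Matrix.single, one_apply, Ne.symm ha]
          · intro j hj hja
            simp [Matrix.single, hja]
          · intro h
            exact absurd (Finset.mem_erase.2 ⟨ha, Finset.mem_univ _⟩) h
      · rw [Finset.sum_eq_zero]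
        · have h0 : ¬((0:Fin (m+3)) = a ∧ (0:Fin (m+3)) = b) := by
            rintro ⟨rfl, rfl⟩; exact hab rfl
          simp [one_apply, Matrix.single, hab, h0]
        · intro j hj
          have : ¬(j = a ∧ j = b) := by rintro ⟨rfl, rfl⟩; exact hab rfl
          simp [Matrix.single, this]
    rw [hsum]
    have hm2' : ((m:ℂ)+2) ≠ 0 := by
      have : ((m+2:ℕ):ℂ) ≠ 0 := Nat.cast_ne_zero.mpr (by omega)
      push_cast at this; exact this
    have hone : (1 : Matrix (Fin (m+3)) (Fin (m+3)) ℂ)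
        = (1 - Matrix.single 0 0 1) + Matrix.single 0 0 1 := by abel
    have e1 : (s*s) * ((m+2:ℕ):ℂ) = 1 := by rw [hs2]; push_cast; field_simp
    have e2 : c*c + s*s = 1 := by rw [hc2, hs2]; field_simp; ring
    rw [show m+3-1 = m+2 from rfl, ← Nat.cast_smul_eq_nsmul ℂ (m+2)
      (Matrix.single 0 0 1 : Matrix (Fin (m+3)) (Fin (m+3)) ℂ), smul_add, smul_smul,
      e1, one_smul]
    conv_rhs => rw [hone]
    rw [add_comm (Matrix.single 0 0 1 : Matrix (Fin (m+3)) (Fin (m+3)) ℂ)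
        ((s*s) • (1 - Matrix.single 0 0 1)), ← add_assoc, ← add_smul, e2, one_smul]
  -- Part 3: linear independence.
  · have hm2 : ((m:ℂ)+2) ≠ 0 := by
      have : ((m+2:ℕ):ℂ) ≠ 0 := Nat.cast_ne_zero.mpr (by omega)
      push_cast at this; exact this
    have hm1 : ((m:ℂ)+1) ≠ 0 := by
      have : ((m+1:ℕ):ℂ) ≠ 0 := Nat.cast_ne_zero.mpr (by omega)
      push_cast at this; exact this
    have hcc : c * c ≠ 0 := by rw [hc2]; exact div_ne_zero hm1 hm2
    have hss : s * s ≠ 0 := by rw [hs2]; exact inv_ne_zero hm2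
    have hc0 : c ≠ 0 := fun h => hcc (by rw [h, zero_mul])
    have hs0 : s ≠ 0 := fun h => hss (by rw [h, zero_mul])
    have hcs : c * s ≠ 0 := mul_ne_zero hc0 hs0
    -- product lemmas
    have h00 : V 0 * V 0 = (c*c) • (1 - Matrix.single 0 0 1) := by
      rw [hV0, Matrix.smul_mul, Matrix.mul_smul, smul_smul]
      congr 1
      rw [sub_mul, mul_sub, mul_sub, one_mul, mul_one, Matrix.single_mul_single_same, mul_one]
      simp only [one_mul]
      abel
    have h0k : ∀ k : Fin (m+3), k ≠ 0 → V 0 * V k = (c*s) • Matrix.single k 0 1 := by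
      intro k hk
      rw [hV0, hVk k hk, Matrix.smul_mul, Matrix.mul_smul, smul_smul]
      congr 1
      rw [sub_mul, one_mul, mul_add, Matrix.single_mul_single_same,
        Matrix.single_mul_single_of_ne (h := (Ne.symm hk)), mul_one]
      abel
    have hk0 : ∀ k : Fin (m+3), k ≠ 0 → V k * V 0 = (c*s) • Matrix.single 0 k 1 := by
      intro k hk
      rw [hV0, hVk k hk, Matrix.smul_mul, Matrix.mul_smul, smul_smul, mul_comm s c]
      congr 1
      rw [mul_sub, mul_one, add_mul, Matrix.single_mul_single_same,
        Matrix.single_mul_single_of_ne (h := hk), mul_one]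
      abel
    have hkl : ∀ k l : Fin (m+3), k ≠ 0 → l ≠ 0 →
        V k * V l = (s*s) • ((if k = l then Matrix.single 0 0 1 else 0) +
          Matrix.single k l 1) := by
      intro k l hk hl
      rw [hVk k hk, hVk l hl, Matrix.smul_mul, Matrix.mul_smul, smul_smul]
      congr 1
      rw [add_mul, mul_add, mul_add, Matrix.single_mul_single_same,
        Matrix.single_mul_single_of_ne (h := hk), Matrix.single_mul_single_of_ne (h := (Ne.symm hl)),
        mul_one]
      rcases eq_or_ne k l with rfl | hkl
      · rw [Matrix.single_mul_single_same, mul_one, if_pos rfl]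
        abel
      · rw [Matrix.single_mul_single_of_ne (h := hkl), if_neg hkl]
        abel
    -- entry lemma
    have hP : ∀ a b : Fin (m+3),
        ((1 - Matrix.single 0 0 1 : Matrix (Fin (m+3)) (Fin (m+3)) ℂ)) a b
          = if a = b ∧ a ≠ 0 then 1 else 0 := by
      intro a b
      rcases eq_or_ne a b with rfl | hab
      · rcases eq_or_ne a 0 with rfl | ha
        · simp [Matrix.single, one_apply]
        · simp [Matrix.single, one_apply, ha, Ne.symm ha]
      · have h0 : ¬((0:Fin (m+3)) = a ∧ (0:Fin (m+3)) = b) := by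
          rintro ⟨rfl, rfl⟩; exact hab rfl
        simp [Matrix.single, one_apply, hab, h0]
    have hE : ∀ (i j a b : Fin (m+3)), Matrix.single i j (1:ℂ) a b =
        if a = i ∧ b = j then 1 else 0 := by
      intro i j a b
      simp [Matrix.single, and_comm, eq_comm]
    have hentry : ∀ (i j a b : Fin (m+3)), (V i * V j) a b =
        if i = 0 then (if j = 0 then (if a = b ∧ a ≠ 0 then c*c else 0)
                       else (if a = j ∧ b = 0 then c*s else 0))
        else (if j = 0 then (if a = 0 ∧ b = i then c*s else 0)
              else ((if i = j ∧ a = 0 ∧ b = 0 then s*s else 0) +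
                    (if a = i ∧ b = j then s*s else 0))) := by
      intro i j a b
      by_cases hi : i = 0 <;> by_cases hj : j = 0
      · subst hi; subst hj
        rw [h00, if_pos rfl, if_pos rfl, Matrix.smul_apply, hP, smul_eq_mul,
          mul_ite, mul_one, mul_zero]
      · subst hi
        rw [h0k j hj, if_pos rfl, if_neg hj, Matrix.smul_apply, hE, smul_eq_mul,
          mul_ite, mul_one, mul_zero]
      · subst hj
        rw [hk0 i hi, if_neg hi, if_pos rfl, Matrix.smul_apply, hE, smul_eq_mul,
          mul_ite, mul_one, mul_zero]
      · rw [hkl i j hi hj, if_neg hi, if_neg hj, Matrix.smul_apply, Matrix.add_apply,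
          smul_eq_mul, mul_add]
        congr 1
        · rcases eq_or_ne i j with rfl | hij
          · rw [if_pos rfl, hE, mul_ite, mul_one, mul_zero]
            simp
          · rw [if_neg hij, Matrix.zero_apply, mul_zero]
            simp [hij]
        · rw [hE, mul_ite, mul_one, mul_zero]
    -- linear independence
    rw [Fintype.linearIndependent_iff]
    intro g hg
    have hM : ∀ a b : Fin (m+3),
        (∑ p : Fin (m+3) × Fin (m+3), g p * (V p.1 * V p.2) a b) = 0 := by
      intro a b
      have h := Matrix.ext_iff.mpr hg (Sum.inl a) (Sum.inl b)
      simpa [Matrix.sum_apply, Matrix.smul_apply, Matrix.fromBlocks_apply₁₁,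
        smul_eq_mul] using h
    have claim1 : ∀ a : Fin (m+3), a ≠ 0 → g (0, a) = 0 := by
      intro a ha
      have h := hM a 0
      have hsum : (∑ p : Fin (m+3) × Fin (m+3), g p * (V p.1 * V p.2) a 0)
          = g (0, a) * ((V 0 * V a) a 0) := by
        apply Finset.sum_eq_single
        · rintro ⟨i, j⟩ - hne
          rw [hentry]
          by_cases hi : i = 0
          · subst hi
            by_cases hj : j = 0
            · subst hj
              rw [if_pos rfl, if_pos rfl, if_neg (fun hx => hx.2 hx.1), mul_zero]
            · have hja : j ≠ a := fun hx => hne (by rw [hx])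
              rw [if_pos rfl, if_neg hj, if_neg (fun hx => hja hx.1.symm), mul_zero]
          · by_cases hj : j = 0
            · subst hj
              rw [if_neg hi, if_pos rfl, if_neg (fun hx => ha hx.1), mul_zero]
            · rw [if_neg hi, if_neg hj, if_neg (fun hx => ha hx.2.1),
                if_neg (fun hx => hj hx.2.symm), add_zero, mul_zero]
        · intro hmem; exact absurd (Finset.mem_univ _) hmem
      rw [hsum, hentry, if_pos rfl, if_neg ha, if_pos ⟨rfl, rfl⟩] at h
      exact (mul_eq_zero.1 h).resolve_right hcs
    have claim2 : ∀ b : Fin (m+3), b ≠ 0 → g (b, 0) = 0 := by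
      intro b hb
      have h := hM 0 b
      have hsum : (∑ p : Fin (m+3) × Fin (m+3), g p * (V p.1 * V p.2) 0 b)
          = g (b, 0) * ((V b * V 0) 0 b) := by
        apply Finset.sum_eq_single
        · rintro ⟨i, j⟩ - hne
          rw [hentry]
          by_cases hi : i = 0
          · subst hi
            by_cases hj : j = 0
            · subst hj
              rw [if_pos rfl, if_pos rfl, if_neg (fun hx => hx.2 rfl), mul_zero]
            · rw [if_pos rfl, if_neg hj, if_neg (fun hx => hj hx.1.symm), mul_zero]
          · by_cases hj : j = 0
            · subst hj
              have hib : i ≠ b := fun hx => hne (by rw [hx])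
              rw [if_neg hi, if_pos rfl, if_neg (fun hx => hib hx.2.symm), mul_zero]
            · rw [if_neg hi, if_neg hj, if_neg (fun hx => hb hx.2.2),
                if_neg (fun hx => hi hx.1.symm), add_zero, mul_zero]
        · intro hmem; exact absurd (Finset.mem_univ _) hmem
      rw [hsum, hentry, if_neg hb, if_pos rfl, if_pos ⟨rfl, rfl⟩] at h
      exact (mul_eq_zero.1 h).resolve_right hcs
    have claim3 : ∀ a b : Fin (m+3), a ≠ 0 → b ≠ 0 → a ≠ b → g (a, b) = 0 := by
      intro a b ha hb hab
      have h := hM a b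
      have hsum : (∑ p : Fin (m+3) × Fin (m+3), g p * (V p.1 * V p.2) a b)
          = g (a, b) * ((V a * V b) a b) := by
        apply Finset.sum_eq_single
        · rintro ⟨i, j⟩ - hne
          rw [hentry]
          by_cases hi : i = 0
          · subst hi
            by_cases hj : j = 0
            · subst hj
              rw [if_pos rfl, if_pos rfl, if_neg (fun hx => hab hx.1), mul_zero]
            · rw [if_pos rfl, if_neg hj, if_neg (fun hx => hb hx.2), mul_zero]
          · by_cases hj : j = 0
            · subst hj
              rw [if_neg hi, if_pos rfl, if_neg (fun hx => ha hx.1), mul_zero]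
            · rw [if_neg hi, if_neg hj, if_neg (fun hx => ha hx.2.1),
                if_neg (fun hx => hne (Prod.ext hx.1.symm hx.2.symm)), add_zero, mul_zero]
        · intro hmem; exact absurd (Finset.mem_univ _) hmem
      rw [hsum, hentry, if_neg ha, if_neg hb, if_neg (fun hx => ha hx.2.1), zero_add,
        if_pos ⟨rfl, rfl⟩] at h
      exact (mul_eq_zero.1 h).resolve_right hss
    have claim4 : ∀ a : Fin (m+3), a ≠ 0 →
        g (0, 0) * (c*c) + g (a, a) * (s*s) = 0 := by
      intro a ha
      have h := hM a a
      rw [← Finset.add_sum_erase _ _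
        (Finset.mem_univ ((0 : Fin (m+3)), (0 : Fin (m+3))))] at h
      rw [← Finset.add_sum_erase _ _ (show ((a, a)) ∈
          (Finset.univ.erase ((0 : Fin (m+3)), (0 : Fin (m+3)))) from
        Finset.mem_erase.2 ⟨by simp [ha], Finset.mem_univ _⟩)] at h
      have hrest : (∑ p ∈ ((Finset.univ.erase
          ((0 : Fin (m+3)), (0 : Fin (m+3)))).erase (a, a)),
          g p * (V p.1 * V p.2) a a) = 0 := by
        apply Finset.sum_eq_zero
        rintro ⟨i, j⟩ hp
        have hne2 : (i, j) ≠ (a, a) := (Finset.mem_erase.1 hp).1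
        have hne1 : (i, j) ≠ ((0 : Fin (m+3)), (0 : Fin (m+3))) :=
          (Finset.mem_erase.1 (Finset.mem_of_mem_erase hp)).1
        rw [hentry]
        by_cases hi : i = 0
        · subst hi
          by_cases hj : j = 0
          · exact absurd (by rw [hj]) hne1
          · rw [if_pos rfl, if_neg hj, if_neg (fun hx => ha hx.2), mul_zero]
        · by_cases hj : j = 0
          · subst hj
            rw [if_neg hi, if_pos rfl, if_neg (fun hx => ha hx.1), mul_zero]
          · rw [if_neg hi, if_neg hj, if_neg (fun hx => ha hx.2.1),
              if_neg (fun hx => hne2 (Prod.ext hx.1.symm hx.2.symm)), add_zero, mul_zero]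
      rw [hrest, add_zero] at h
      have e00 : (V (0, 0).1 * V ((0 : Fin (m+3)), (0 : Fin (m+3))).2) a a = c*c := by
        show (V 0 * V 0) a a = c*c
        rw [hentry, if_pos rfl, if_pos rfl, if_pos ⟨rfl, ha⟩]
      have eaa : (V (a, a).1 * V (a, a).2) a a = s*s := by
        show (V a * V a) a a = s*s
        rw [hentry, if_neg ha, if_neg ha, if_neg (fun hx => ha hx.2.1), zero_add,
          if_pos ⟨rfl, rfl⟩]
      rw [e00, eaa] at h
      exact h
    have g00 : g (0, 0) = 0 := by
      have h := hM 0 0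
      have hcongr : ∀ p : Fin (m+3) × Fin (m+3), g p * (V p.1 * V p.2) 0 0
          = if p.1 = p.2 ∧ p.1 ≠ 0 then -(g (0, 0) * (c*c)) else 0 := by
        rintro ⟨i, j⟩
        rw [hentry]
        by_cases hi : i = 0
        · subst hi
          by_cases hj : j = 0
          · subst hj
            rw [if_pos rfl, if_pos rfl, if_neg (fun hx => hx.2 hx.1), mul_zero,
              if_neg (fun hx => hx.2 rfl)]
          · rw [if_pos rfl, if_neg hj, if_neg (fun hx => hj hx.1.symm), mul_zero,
              if_neg (fun hx => hx.2 rfl)]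
        · by_cases hj : j = 0
          · subst hj
            rw [if_neg hi, if_pos rfl, if_neg (fun hx => hi hx.2.symm), mul_zero,
              if_neg (fun hx => hi hx.1)]
          · rw [if_neg hi, if_neg hj]
            rcases eq_or_ne i j with rfl | hij
            · rw [if_pos ⟨rfl, rfl, rfl⟩, if_neg (fun hx => hi hx.1.symm), add_zero,
                if_pos ⟨rfl, hi⟩]
              have h4 := claim4 i hi
              linear_combination h4
            · rw [if_neg (fun hx => hij hx.1), if_neg (fun hx => hi hx.1.symm),
                add_zero, mul_zero, if_neg (fun hx => hij hx.1)]
      rw [Finset.sum_congr rfl (fun p _ => hcongr p), Finset.sum_ite,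
        Finset.sum_const, Finset.sum_const_zero, add_zero, nsmul_eq_mul] at h
      have hcard : ((Finset.univ.filter
          (fun p : Fin (m+3) × Fin (m+3) => p.1 = p.2 ∧ p.1 ≠ 0)).card : ℂ) ≠ 0 := by
        rw [Nat.cast_ne_zero, ← Nat.pos_iff_ne_zero, Finset.card_pos]
        refine ⟨((1 : Fin (m+3)), (1 : Fin (m+3))), ?_⟩
        simp only [Finset.mem_filter, Finset.mem_univ, true_and]
        exact fun h => absurd (congrArg Fin.val h) (by rw [Fin.val_one, Fin.val_zero]; omega)
      have h2 := (mul_eq_zero.1 h).resolve_left hcard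
      rw [neg_eq_zero] at h2
      exact (mul_eq_zero.1 h2).resolve_right hcc
    have gdiag : ∀ a : Fin (m+3), a ≠ 0 → g (a, a) = 0 := by
      intro a ha
      have h := claim4 a ha
      rw [g00, zero_mul, zero_add] at h
      exact (mul_eq_zero.1 h).resolve_right hss
    rintro ⟨i, j⟩
    by_cases hi : i = 0
    · subst hi
      by_cases hj : j = 0
      · subst hj; exact g00
      · exact claim1 j hj
    · by_cases hj : j = 0
      · subst hj; exact claim2 i hi
      · rcases eq_or_ne i j with rfl | hij
        · exact gdiag i hi
        · exact claim3 i j hi hj hij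
end

section
/- Let d ≥ 2, m ≥ 1, and define ρ = (1/(d(d+m))) [ Σ_{i=1}^{d+1} Σ_{r,s=1}^{d} |e^d_r ⊗ e^{d+m}_{mod(r+i−2,d+1)+1}⟩⟨e^d_s ⊗ e^{d+m}_{mod(s+i−2,d+1)+1}| + J_d ⊗ (0_{d+1} ⊕ I_{m−1}) ]. Then the partial transpose of ρ in the first tensor factor, ρ^{T_1}, is positive semidefinite. -/
open Matrix Kronecker ComplexOrder

noncomputable def outer {ι : Type*} (u v : ι → ℂ) : Matrix ι ι ℂ :=
  Matrix.of fun a b => u a * (starRingEnd ℂ) (v b)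

/-- `e^d_r ⊗ e^{d+m}_{(r+i) mod (d+1)}` (0-based indices). -/
noncomputable def tv (d m : ℕ) (i : Fin (d + 1)) (r : Fin d) : Fin d × Fin (d + m) → ℂ :=
  fun p => (if p.1 = r then 1 else 0) *
    (if (p.2 : ℕ) = ((r : ℕ) + (i : ℕ)) % (d + 1) then 1 else 0)

private lemma sum_rhs {P Q : Prop} [Decidable P] [Decidable Q] (n u v : ℕ) (hn : 0 < n) :
    ∑ k ∈ Finset.range n, ((if P ∧ u % n = k then (1:ℂ) else 0) *
        (if Q ∧ v % n = k then 1 else 0))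
      = if P ∧ Q ∧ u % n = v % n then 1 else 0 := by
  have h1 : ∀ k ∈ Finset.range n,
      (if P ∧ u % n = k then (1:ℂ) else 0) * (if Q ∧ v % n = k then 1 else 0)
        = if u % n = k then (if P ∧ Q ∧ u % n = v % n then 1 else 0) else 0 := by
    intro k _
    split_ifs <;> simp_all
  rw [Finset.sum_congr rfl h1, Finset.sum_ite_eq (Finset.range n) (u % n)]
  simp [Nat.mod_lt _ hn]

private lemma sum_lhs (n a b x y : ℕ) (hn : 0 < n) (ha : a < n) :
    ∑ i ∈ Finset.range n, ((if x = (a + i) % n then (1:ℂ) else 0) *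
        (if y = (b + i) % n then 1 else 0))
      = if x < n ∧ y < n ∧ (b + x) % n = (a + y) % n then 1 else 0 := by
  by_cases hx : x < n
  · have hi0lt : (x + n - a) % n < n := Nat.mod_lt _ hn
    have hkey : (a + (x + n - a) % n) % n = x := by
      rw [Nat.add_mod_mod]
      have : a + (x + n - a) = x + n := by omega
      rw [this, Nat.add_mod_right, Nat.mod_eq_of_lt hx]
    have h1 : ∀ i ∈ Finset.range n,
        (if x = (a + i) % n then (1:ℂ) else 0) * (if y = (b + i) % n then 1 else 0)
          = if (x + n - a) % n = i then (if y = (b + i) % n then 1 else 0) else 0 := by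
      intro i hi
      rw [Finset.mem_range] at hi
      have hiff : (x = (a + i) % n) = ((x + n - a) % n = i) := by
        apply propext; constructor
        · intro h
          have hmod : (a + (x + n - a) % n) % n = (a + i) % n := by rw [hkey, h]
          have h2 : (x + n - a) % n % n = i % n := Nat.ModEq.add_left_cancel' a hmod
          rwa [Nat.mod_eq_of_lt hi0lt, Nat.mod_eq_of_lt hi] at h2
        · intro h; rw [← h, hkey]
      simp only [hiff, ite_mul, one_mul, zero_mul]
    rw [Finset.sum_congr rfl h1, Finset.sum_ite_eq (Finset.range n) ((x + n - a) % n),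
      if_pos (Finset.mem_range.mpr hi0lt)]
    have hiff2 : y = (b + (x + n - a) % n) % n ↔ (y < n ∧ (b + x) % n = (a + y) % n) := by
      constructor
      · intro h
        constructor
        · rw [h]; exact Nat.mod_lt _ hn
        · symm
          rw [h, Nat.add_mod_mod, show a + (b + (x + n - a) % n) = b + (a + (x + n - a) % n) by
            ring, ← Nat.add_mod_mod, hkey]
      · rintro ⟨hy, hmod⟩
        have e1 : (b + (x + n - a) % n) % n = (b + x + n - a) % n := by
          rw [Nat.add_mod_mod]; congr 1; omega
        have e3 : (b + x + n - a + a) % n = (y + a) % n := by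
          rw [show b + x + n - a + a = b + x + n from by omega, Nat.add_mod_right, hmod,
            Nat.add_comm a y]
        have e4 : (b + x + n - a) % n = y % n := Nat.ModEq.add_right_cancel' a e3
        rw [e1, e4, Nat.mod_eq_of_lt hy]
    simp only [hiff2]
    simp [hx]
  · have h0 : ∀ i ∈ Finset.range n,
        (if x = (a + i) % n then (1:ℂ) else 0) * (if y = (b + i) % n then 1 else 0) = 0 := by
      intro i _
      have hlt := Nat.mod_lt (a + i) hn
      rw [if_neg (by intro h; rw [h] at hx; exact hx hlt), zero_mul]
    rw [Finset.sum_eq_zero h0, if_neg (by tauto)]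

noncomputable def Vmat (d m : ℕ) : Matrix (Fin (d+1) ⊕ Fin (d+m)) (Fin d × Fin (d+m)) ℂ :=
  Matrix.of fun k p => match k with
  | Sum.inl k => if (p.2 : ℕ) < d + 1 ∧ ((p.1 : ℕ) + (p.2 : ℕ)) % (d + 1) = (k : ℕ) then 1 else 0
  | Sum.inr a => if p.2 = a ∧ d + 1 ≤ (a : ℕ) then 1 else 0

/-- the partial transpose (in the first factor) of the Choi state `ρ`
is positive semidefinite. -/
theorem stmt_13 (d m : ℕ) (hd : 2 ≤ d) (hm : 1 ≤ m)
    (ρ : Matrix (Fin d × Fin (d + m)) (Fin d × Fin (d + m)) ℂ)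
    (hρ : ρ = (1 / ((d : ℂ) * (d + m))) •
      (∑ i : Fin (d + 1), ∑ r : Fin d, ∑ s : Fin d, outer (tv d m i r) (tv d m i s)
        + (Matrix.of fun (_ _ : Fin d) => (1 : ℂ)) ⊗ₖ
            (Matrix.of fun (a b : Fin (d + m)) =>
              if a = b ∧ d + 1 ≤ (a : ℕ) then 1 else 0))) :
    (Matrix.of fun (p q : Fin d × Fin (d + m)) => ρ (q.1, p.2) (p.1, q.2)).PosSemidef := by
  set c : ℝ := Real.sqrt (1 / (d * (d + m))) with hc
  have hcnn : (0:ℝ) ≤ 1 / (d * (d + m)) := by positivity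
  have hcc : (c : ℂ) * (c : ℂ) = 1 / ((d : ℂ) * ((d : ℂ) + (m : ℂ))) := by
    rw [← Complex.ofReal_mul, Real.mul_self_sqrt hcnn]
    push_cast
    ring
  have key : (Matrix.of fun (p q : Fin d × Fin (d + m)) => ρ (q.1, p.2) (p.1, q.2))
      = ((c : ℂ) • Vmat d m)ᴴ * ((c : ℂ) • Vmat d m) := by
    have hsm : ((c : ℂ) • Vmat d m)ᴴ * ((c : ℂ) • Vmat d m)
        = ((c : ℂ) * (c : ℂ)) • ((Vmat d m)ᴴ * (Vmat d m)) := by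
      rw [conjTranspose_smul, Complex.star_def, Complex.conj_ofReal, Matrix.smul_mul, Matrix.mul_smul,
        smul_smul]
    rw [hsm, hcc]
    ext ⟨p1, p2⟩ ⟨q1, q2⟩
    subst hρ
    simp only [Matrix.of_apply, Matrix.smul_apply, smul_eq_mul]
    congr 1
    have hr : ∀ i : Fin (d+1), ∑ r : Fin d, tv d m i r (q1, p2)
        = if (p2:ℕ) = ((q1:ℕ) + (i:ℕ)) % (d+1) then (1:ℂ) else 0 := by
      intro i
      simp only [tv, ite_mul, one_mul, zero_mul]
      rw [Finset.sum_ite_eq]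
      simp
    have hs : ∀ i : Fin (d+1), ∑ s : Fin d, (starRingEnd ℂ) (tv d m i s (p1, q2))
        = if (q2:ℕ) = ((p1:ℕ) + (i:ℕ)) % (d+1) then (1:ℂ) else 0 := by
      intro i
      simp only [tv, _root_.map_mul, apply_ite (starRingEnd ℂ), _root_.map_one, _root_.map_zero, ite_mul,
        one_mul, zero_mul]
      rw [Finset.sum_ite_eq]
      simp
    have hA : (∑ i : Fin (d+1), ∑ r : Fin d, ∑ s : Fin d, outer (tv d m i r) (tv d m i s))
        (q1, p2) (p1, q2)
        = if ((p2:ℕ) < d+1 ∧ (q2:ℕ) < d+1 ∧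
            ((p1:ℕ)+(p2:ℕ)) % (d+1) = ((q1:ℕ)+(q2:ℕ)) % (d+1)) then (1:ℂ) else 0 := by
      simp only [Matrix.sum_apply, outer, Matrix.of_apply]
      have h1 : ∀ i : Fin (d+1), ∑ r : Fin d, ∑ s : Fin d,
          tv d m i r (q1, p2) * (starRingEnd ℂ) (tv d m i s (p1, q2))
          = (if (p2:ℕ) = ((q1:ℕ) + (i:ℕ)) % (d+1) then (1:ℂ) else 0) *
            (if (q2:ℕ) = ((p1:ℕ) + (i:ℕ)) % (d+1) then 1 else 0) := by
        intro i
        rw [← Finset.sum_mul_sum, hr i, hs i]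
      rw [Finset.sum_congr rfl (fun i _ => h1 i),
        Fin.sum_univ_eq_sum_range (fun i => (if (p2:ℕ) = ((q1:ℕ) + i) % (d+1) then (1:ℂ) else 0) *
          (if (q2:ℕ) = ((p1:ℕ) + i) % (d+1) then 1 else 0)) (d+1)]
      exact sum_lhs (d+1) q1 p1 p2 q2 (by omega) (Nat.lt_succ_of_lt q1.2)
    have hinl : ∑ k : Fin (d+1), star (Vmat d m (Sum.inl k) (p1, p2)) *
          Vmat d m (Sum.inl k) (q1, q2)
        = if ((p2:ℕ) < d+1 ∧ (q2:ℕ) < d+1 ∧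
            ((p1:ℕ)+(p2:ℕ)) % (d+1) = ((q1:ℕ)+(q2:ℕ)) % (d+1)) then (1:ℂ) else 0 := by
      simp only [Vmat, Matrix.of_apply, apply_ite (star : ℂ → ℂ), star_one, star_zero]
      rw [Fin.sum_univ_eq_sum_range (fun k =>
        (if (p2:ℕ) < d+1 ∧ ((p1:ℕ)+(p2:ℕ)) % (d+1) = k then (1:ℂ) else 0) *
        (if (q2:ℕ) < d+1 ∧ ((q1:ℕ)+(q2:ℕ)) % (d+1) = k then 1 else 0)) (d+1)]
      exact sum_rhs _ _ _ (by omega)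
    have hinr : ∑ a : Fin (d+m), star (Vmat d m (Sum.inr a) (p1, p2)) *
          Vmat d m (Sum.inr a) (q1, q2)
        = if p2 = q2 ∧ d+1 ≤ (p2:ℕ) then (1:ℂ) else 0 := by
      simp only [Vmat, Matrix.of_apply, apply_ite (star : ℂ → ℂ), star_one, star_zero]
      have h2 : ∀ a : Fin (d+m),
          (if p2 = a ∧ d+1 ≤ (a:ℕ) then (1:ℂ) else 0) *
            (if q2 = a ∧ d+1 ≤ (a:ℕ) then 1 else 0)
          = if p2 = a then (if p2 = q2 ∧ d+1 ≤ (p2:ℕ) then 1 else 0) else 0 := by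
        intro a
        rcases eq_or_ne p2 a with h | h
        · subst h
          by_cases h2 : q2 = p2 <;> by_cases h3 : d+1 ≤ (p2:ℕ) <;>
            simp [h2, h3, eq_comm (a := p2) (b := q2)]
        · simp [h, Ne.symm h]
      rw [Finset.sum_congr rfl (fun a _ => h2 a), Finset.sum_ite_eq]
      simp
    rw [Matrix.add_apply, Matrix.mul_apply]
    simp only [Matrix.conjTranspose_apply]
    rw [Fintype.sum_sum_type, hinl, hinr, hA]
    simp [Matrix.kroneckerMap_apply]
  rw [key]
  exact Matrix.posSemidef_conjTranspose_mul_self _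
end
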